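/- Let a(n,k) be defined by a(0,0)=1, a(0,k)=0 for k>0, and a(n,k) = a(n-1,k-1) + s_k·a(n-1,k) + t_{k+1}·a(n-1,k+1) with s_0 = w, s_ℓ = 2ℓ + w for ℓ ≥ 1, and t_ℓ = ℓ(ℓ-1+w). Then a(n,k) = ∑_{π ∈ P(n,k)} w^{rlmin(π)} as polynomials in w. -/

import Mathlib

namespace PP

def isPP {n : ℕ} (M : Fin n → Fin n → Bool) : Prop :=
  (∀ i j j', M i j = true → M i j' = true → j = j') ∧
  (∀ i i' j, M i j = true → M i' j = true → i = i')

def zeroRows {n : ℕ} (M : Fin n → Fin n → Bool) : ℕ :=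
  (Finset.univ.filter (fun i : Fin n => ∀ j, M i j = false)).card

def invStat {n : ℕ} (M : Fin n → Fin n → Bool) : ℕ :=
  (Finset.univ.filter (fun p : Fin n × Fin n =>
    M p.1 p.2 = false ∧ (∀ j' < p.2, M p.1 j' = false) ∧ (∀ i' < p.1, M i' p.2 = false) ∧
    ((∃ j', M p.1 j' = true) ∨ (∃ i', M i' p.2 = true)))).card

def rlminStat {n : ℕ} (M : Fin n → Fin n → Bool) : ℕ :=
  (Finset.univ.filter (fun p : Fin n × Fin n =>
    M p.1 p.2 = true ∧ ∀ l < p.2, ∃ i' < p.1, M i' l = true)).card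

def excStat {n : ℕ} (M : Fin n → Fin n → Bool) : ℕ :=
  (Finset.univ.filter (fun p : Fin n × Fin n => M p.1 p.2 = true ∧ p.1 < p.2)).card

def wexStat {n : ℕ} (M : Fin n → Fin n → Bool) : ℕ :=
  (Finset.univ.filter (fun p : Fin n × Fin n => M p.1 p.2 = true ∧ p.1 ≤ p.2)).card

def reachN {n : ℕ} (M : Fin n → Fin n → Bool) : ℕ → Fin n → Fin n → Prop
  | 0, i, j => i = j
  | m+1, i, j => ∃ l, M i l = true ∧ reachN M m l j

noncomputable def cycStat {n : ℕ} (M : Fin n → Fin n → Bool) : ℕ :=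
  Nat.card {i : Fin n // (∃ m, 0 < m ∧ reachN M m i i) ∧ ∀ j, (∃ m, reachN M m i j) → j ≤ i}

def fixStat {n : ℕ} (M : Fin n → Fin n → Bool) : ℕ :=
  (Finset.univ.filter (fun i : Fin n => M i i = true)).card

noncomputable def cycGe2Stat {n : ℕ} (M : Fin n → Fin n → Bool) : ℕ :=
  Nat.card {i : Fin n // (∃ m, 0 < m ∧ reachN M m i i) ∧ (∀ j, (∃ m, reachN M m i j) → j ≤ i) ∧ M i i = false}

def Conn {n : ℕ} (M : Fin n → Fin n → Bool) : Prop :=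
  ∀ i : ℕ, 0 < i → i < n → ∃ r : Fin n, r.1 < i ∧ ∀ c : Fin n, c.1 < i → M r c = false

def UpDownFrom {n : ℕ} (M : Fin n → Fin n → Bool) (i : Fin n) : Prop :=
  ∀ (m : ℕ) (a b : Fin n),
    (∀ m', 1 ≤ m' → m' ≤ m + 1 → ¬ reachN M m' i i) →
    reachN M m i a → M a b = true →
    ((Even m → a < b) ∧ (¬ Even m → b < a))

def CUD {n : ℕ} (M : Fin n → Fin n → Bool) : Prop :=
  (∀ i : Fin n,
      ((∃ m, 0 < m ∧ reachN M m i i) ∧ ∀ j, (∃ m, reachN M m i j) → i ≤ j) →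
      UpDownFrom M i) ∧
  (∀ i : Fin n, (∀ i', M i' i = false) → UpDownFrom M i)

def desStat {n : ℕ} (M : Fin n → Fin n → Bool) : ℕ :=
  (Finset.univ.filter (fun p : Fin n × Fin n =>
      M p.1 p.2 = true ∧ ∃ h : p.1.1 + 1 < n, ∃ b : Fin n, M ⟨p.1.1 + 1, h⟩ b = true ∧ b < p.2)).card
  + (Finset.univ.filter (fun p : Fin n =>
      (∀ j, M p j = false) ∧ ∃ _h : 0 < p.1, ∃ a j : Fin n,
        M ⟨p.1 - 1, Nat.lt_of_le_of_lt (Nat.sub_le _ _) p.isLt⟩ a = true ∧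
        (∀ i, M i j = false) ∧
        (Finset.univ.filter (fun m : Fin n => (∀ i, M i m = false) ∧ m < j)).card
          = (Finset.univ.filter (fun r : Fin n => (∀ c, M r c = false) ∧ r < p)).card ∧
        j < a)).card

def gbinom {R : Type*} [CommRing R] (q : R) : ℕ → ℕ → R
  | _, 0 => 1
  | 0, _+1 => 0
  | n+1, k+1 => gbinom q n k + q ^ (k+1) * gbinom q n (k+1)

end PP

section Aux
open PP Finset Polynomial
open scoped Classical

variable {n : ℕ}

def ind {m : ℕ} (a : Fin m) : Fin m → Bool := fun x => decide (x = a)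

@[simp] lemma ind_self {m : ℕ} (a : Fin m) : ind a a = true := by simp [ind]

lemma ind_eq_true_iff {m : ℕ} (a x : Fin m) : ind a x = true ↔ x = a := by simp [ind]

def glue (M' : Fin n → Fin n → Bool) (lr : Fin (n+1) → Bool) (lc : Fin n → Bool) :
    Fin (n+1) → Fin (n+1) → Bool :=
  fun i j =>
    if hi : (i : ℕ) < n then
      if hj : (j : ℕ) < n then M' ⟨i, hi⟩ ⟨j, hj⟩ else lc ⟨i, hi⟩
    else lr j

@[simp] lemma glue_cc (M' : Fin n → Fin n → Bool) (lr lc) (i j : Fin n) :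
    glue M' lr lc i.castSucc j.castSucc = M' i j := by
  simp [glue, i.isLt, j.isLt]

@[simp] lemma glue_last_row (M' : Fin n → Fin n → Bool) (lr lc) (j : Fin (n+1)) :
    glue M' lr lc (Fin.last n) j = lr j := by
  simp [glue]

@[simp] lemma glue_cl (M' : Fin n → Fin n → Bool) (lr lc) (i : Fin n) :
    glue M' lr lc i.castSucc (Fin.last n) = lc i := by
  simp [glue, i.isLt]

lemma sum_glue {β : Type*} [AddCommMonoid β] (F : (Fin (n+1) → Fin (n+1) → Bool) → β) :
    ∑ M : Fin (n+1) → Fin (n+1) → Bool, F M =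
      ∑ M' : Fin n → Fin n → Bool, ∑ lr : Fin (n+1) → Bool, ∑ lc : Fin n → Bool,
        F (glue M' lr lc) := by
  have hbij : Function.Bijective
      (fun t : (Fin n → Fin n → Bool) × (Fin (n+1) → Bool) × (Fin n → Bool) =>
        glue t.1 t.2.1 t.2.2) := by
    constructor
    · rintro ⟨M₁, lr₁, lc₁⟩ ⟨M₂, lr₂, lc₂⟩ h
      simp only [Prod.mk.injEq]
      refine ⟨funext fun i => funext fun j => ?_, funext fun j => ?_, funext fun i => ?_⟩
      · have := congrFun (congrFun h i.castSucc) j.castSucc; simpa using this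
      · have := congrFun (congrFun h (Fin.last n)) j; simpa using this
      · have := congrFun (congrFun h i.castSucc) (Fin.last n); simpa using this
    · intro M
      refine ⟨⟨fun i j => M i.castSucc j.castSucc, fun j => M (Fin.last n) j,
        fun i => M i.castSucc (Fin.last n)⟩, ?_⟩
      funext i j
      rcases Fin.eq_castSucc_or_eq_last i with ⟨i', rfl⟩ | rfl
      · rcases Fin.eq_castSucc_or_eq_last j with ⟨j', rfl⟩ | rfl
        · simp
        · simp
      · simp
  rw [← Function.Bijective.sum_comp hbij F]
  rw [Fintype.sum_prod_type]
  simp [Fintype.sum_prod_type]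
lemma sum_boolfun {m : ℕ} {β : Type*} [AddCommMonoid β] (f : (Fin m → Bool) → β)
    (hf : ∀ g : Fin m → Bool, (∃ a a', a ≠ a' ∧ g a = true ∧ g a' = true) → f g = 0) :
    (∑ g : Fin m → Bool, f g) = f (fun _ => false) + ∑ a : Fin m, f (ind a) := by
  classical
  set φ : Option (Fin m) → (Fin m → Bool) := fun o => o.elim (fun _ => false) ind with hφ
  have hinj : Function.Injective φ := by
    rintro (_ | a) (_ | b) h
    · rfl
    · exact absurd (congrFun h b).symm (by simp [φ, ind])
    · exact absurd (congrFun h a) (by simp [φ, ind])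
    · have := congrFun h a; simp [φ, ind] at this; simp [this]
  have hsub : (Finset.univ.image φ) ⊆ Finset.univ := subset_univ _
  have h1 : ∑ g : Fin m → Bool, f g = ∑ g ∈ Finset.univ.image φ, f g := by
    refine (Finset.sum_subset hsub ?_).symm
    intro g _ hg
    apply hf
    by_contra hcon
    apply hg
    by_cases hz : ∀ a, g a = false
    · refine mem_image.2 ⟨none, mem_univ _, ?_⟩
      exact funext fun a => (hz a).symm
    · push_neg at hz
      obtain ⟨a, ha⟩ := hz
      have ha' : g a = true := by simpa using ha
      refine mem_image.2 ⟨some a, mem_univ _, ?_⟩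
      funext x
      by_cases hx : x = a
      · subst hx; simp [φ, ind, ha']
      · have : g x ≠ true := fun hgx => hcon ⟨x, a, hx, hgx, ha'⟩
        simp [φ, ind, hx, Bool.not_eq_true] at this ⊢
        exact this
  rw [h1, Finset.sum_image (fun a _ b _ h => hinj h)]
  rw [Fintype.sum_option]
  simp [φ]

lemma minsum {m : ℕ} (S : Finset (Fin m)) (hS : S.Nonempty) :
    (∑ j ∈ S, if (∀ l < j, l ∉ S) then (Polynomial.X : Polynomial ℤ) else 1)
      = ((S.card - 1 : ℕ) : Polynomial ℤ) + Polynomial.X := by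
  classical
  set m₀ := S.min' hS with hm₀
  have hmem : m₀ ∈ S := S.min'_mem hS
  have hcond : ∀ j ∈ S, ((∀ l < j, l ∉ S) ↔ j = m₀) := by
    intro j hj
    constructor
    · intro h
      by_contra hne
      have : m₀ < j := lt_of_le_of_ne (S.min'_le j hj) (Ne.symm hne)
      exact h m₀ this hmem
    · rintro rfl l hl hlS
      exact absurd (S.min'_le l hlS) (not_le.2 hl)
  rw [Finset.sum_congr rfl (fun j hj => if_congr (hcond j hj) rfl rfl)]
  rw [← Finset.insert_erase hmem, Finset.sum_insert (Finset.notMem_erase _ _), if_pos rfl]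
  have h2 : ∀ j ∈ S.erase m₀, (if j = m₀ then (Polynomial.X : Polynomial ℤ) else 1) = 1 := by
    intro j hj
    exact if_neg (Finset.ne_of_mem_erase hj)
  rw [Finset.sum_congr rfl h2, Finset.sum_const, nsmul_eq_mul, mul_one,
    Finset.card_erase_of_mem hmem, Finset.card_insert_of_notMem (Finset.notMem_erase _ _),
    Finset.card_erase_of_mem hmem]
  have : #S - 1 + 1 - 1 = #S - 1 := by omega
  rw [this]
  ring

def zeroCols {n : ℕ} (M : Fin n → Fin n → Bool) : Finset (Fin n) :=
  Finset.univ.filter (fun j => ∀ i, M i j = false)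

def zeroRowsSet {n : ℕ} (M : Fin n → Fin n → Bool) : Finset (Fin n) :=
  Finset.univ.filter (fun i => ∀ j, M i j = false)

lemma zeroRows_eq_card (M : Fin n → Fin n → Bool) : zeroRows M = (zeroRowsSet M).card := rfl

lemma card_zeroCols (M : Fin n → Fin n → Bool) (h : isPP M) :
    (zeroCols M).card = zeroRows M := by
  classical
  have key : (Finset.univ.filter (fun i : Fin n => ∃ j, M i j = true)).card
      = (Finset.univ.filter (fun j : Fin n => ∃ i, M i j = true)).card := by
    apply Finset.card_bij (fun i hi => Classical.choose (by
      simpa using (Finset.mem_filter.1 hi).2 : ∃ j, M i j = true))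
    · intro i hi
      have hspec := Classical.choose_spec (by
        simpa using (Finset.mem_filter.1 hi).2 : ∃ j, M i j = true)
      exact Finset.mem_filter.2 ⟨mem_univ _, ⟨i, hspec⟩⟩
    · intro i₁ h₁ i₂ h₂ heq
      have s₁ := Classical.choose_spec (by
        simpa using (Finset.mem_filter.1 h₁).2 : ∃ j, M i₁ j = true)
      have s₂ := Classical.choose_spec (by
        simpa using (Finset.mem_filter.1 h₂).2 : ∃ j, M i₂ j = true)
      rw [heq] at s₁
      exact h.2 _ _ _ s₁ s₂
    · intro j hj
      obtain ⟨i, hi⟩ := by simpa using (Finset.mem_filter.1 hj).2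
      refine ⟨i, Finset.mem_filter.2 ⟨mem_univ _, ⟨j, hi⟩⟩, ?_⟩
      have hspec := Classical.choose_spec (by
        simpa using (Finset.mem_filter.1 (Finset.mem_filter.2
          ⟨mem_univ i, ⟨j, hi⟩⟩ : i ∈ Finset.univ.filter (fun i : Fin n => ∃ j, M i j = true))).2
          : ∃ j', M i j' = true)
      exact (h.1 _ _ _ hspec hi)
  have hrow : (Finset.univ.filter (fun i : Fin n => ∃ j, M i j = true)).card + zeroRows M = n := by
    rw [zeroRows]
    have : ∀ i : Fin n, (∀ j, M i j = false) ↔ ¬ (∃ j, M i j = true) := by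
      intro i; push_neg; simp
    rw [Finset.filter_congr (fun i _ => this i)]
    rw [Finset.card_filter_add_card_filter_not (fun i => ∃ j, M i j = true)]
    simp
  have hcol : (Finset.univ.filter (fun j : Fin n => ∃ i, M i j = true)).card + (zeroCols M).card = n := by
    rw [zeroCols]
    have : ∀ j : Fin n, (∀ i, M i j = false) ↔ ¬ (∃ i, M i j = true) := by
      intro j; push_neg; simp
    rw [Finset.filter_congr (fun j _ => this j)]
    rw [Finset.card_filter_add_card_filter_not (fun j => ∃ i, M i j = true)]
    simp
  omega
lemma lt_last_cast {l : Fin (n+1)} (h : l < Fin.last n) : ∃ l' : Fin n, l = l'.castSucc := by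
  have : (l : ℕ) < n := by simpa [Fin.lt_def] using h
  exact ⟨⟨l, this⟩, by ext; simp⟩

lemma lt_cs_cast {l : Fin (n+1)} {j : Fin n} (h : l < j.castSucc) :
    ∃ l' : Fin n, l = l'.castSucc ∧ l' < j := by
  have h1 : (l : ℕ) < (j : ℕ) := by simpa [Fin.lt_def] using h
  have h2 : (l : ℕ) < n := h1.trans j.isLt
  exact ⟨⟨l, h2⟩, by ext; simp, by simp [Fin.lt_def, h1]⟩

lemma isPP_glue_iff (M' : Fin n → Fin n → Bool) (lr : Fin (n+1) → Bool) (lc : Fin n → Bool) :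
    isPP (glue M' lr lc) ↔
      isPP M' ∧
      (∀ j j', lr j = true → lr j' = true → j = j') ∧
      (∀ i i', lc i = true → lc i' = true → i = i') ∧
      (∀ j : Fin n, lr j.castSucc = true → ∀ i, M' i j = false) ∧
      (∀ i : Fin n, lc i = true → ∀ j, M' i j = false) ∧
      (lr (Fin.last n) = true → ∀ i, lc i = false) := by
  constructor
  · rintro ⟨hrow, hcol⟩
    refine ⟨⟨?_, ?_⟩, ?_, ?_, ?_, ?_, ?_⟩
    · intro i j j' h1 h2
      have := hrow i.castSucc j.castSucc j'.castSucc (by simpa using h1) (by simpa using h2)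
      exact Fin.castSucc_injective n this
    · intro i i' j h1 h2
      have := hcol i.castSucc i'.castSucc j.castSucc (by simpa using h1) (by simpa using h2)
      exact Fin.castSucc_injective n this
    · intro j j' h1 h2
      exact hrow (Fin.last n) j j' (by simpa using h1) (by simpa using h2)
    · intro i i' h1 h2
      have := hcol i.castSucc i'.castSucc (Fin.last n) (by simpa using h1) (by simpa using h2)
      exact Fin.castSucc_injective n this
    · intro j hj i
      by_contra hM
      rw [Bool.not_eq_false] at hM
      have := hcol (Fin.last n) i.castSucc j.castSucc (by simpa using hj) (by simpa using hM)
      exact absurd this.symm (Fin.castSucc_lt_last i).ne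
    · intro i hi j
      by_contra hM
      rw [Bool.not_eq_false] at hM
      have := hrow i.castSucc (Fin.last n) j.castSucc (by simpa using hi) (by simpa using hM)
      exact absurd this.symm (Fin.castSucc_lt_last j).ne
    · intro hlast i
      by_contra hci
      rw [Bool.not_eq_false] at hci
      have := hcol (Fin.last n) i.castSucc (Fin.last n) (by simpa using hlast) (by simpa using hci)
      exact absurd this.symm (Fin.castSucc_lt_last i).ne
  · rintro ⟨⟨hrow', hcol'⟩, hlr, hlc, hlrM, hlcM, hlrlc⟩
    constructor
    · intro i j j' h1 h2
      rcases Fin.eq_castSucc_or_eq_last i with ⟨i₀, rfl⟩ | rfl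
      · rcases Fin.eq_castSucc_or_eq_last j with ⟨j₀, rfl⟩ | rfl
        · rcases Fin.eq_castSucc_or_eq_last j' with ⟨j₀', rfl⟩ | rfl
          · rw [hrow' i₀ j₀ j₀' (by simpa using h1) (by simpa using h2)]
          · exact absurd (by simpa using h1) (by simp [hlcM i₀ (by simpa using h2) j₀])
        · rcases Fin.eq_castSucc_or_eq_last j' with ⟨j₀', rfl⟩ | rfl
          · exact absurd (by simpa using h2) (by simp [hlcM i₀ (by simpa using h1) j₀'])
          · rfl
      · exact hlr j j' (by simpa using h1) (by simpa using h2)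
    · intro i i' j h1 h2
      rcases Fin.eq_castSucc_or_eq_last j with ⟨j₀, rfl⟩ | rfl
      · rcases Fin.eq_castSucc_or_eq_last i with ⟨i₀, rfl⟩ | rfl
        · rcases Fin.eq_castSucc_or_eq_last i' with ⟨i₀', rfl⟩ | rfl
          · rw [hcol' i₀ i₀' j₀ (by simpa using h1) (by simpa using h2)]
          · exact absurd (by simpa using h1) (by simp [hlrM j₀ (by simpa using h2) i₀])
        · rcases Fin.eq_castSucc_or_eq_last i' with ⟨i₀', rfl⟩ | rfl
          · exact absurd (by simpa using h2) (by simp [hlrM j₀ (by simpa using h1) i₀'])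
          · rfl
      · rcases Fin.eq_castSucc_or_eq_last i with ⟨i₀, rfl⟩ | rfl
        · rcases Fin.eq_castSucc_or_eq_last i' with ⟨i₀', rfl⟩ | rfl
          · rw [hlc i₀ i₀' (by simpa using h1) (by simpa using h2)]
          · exact absurd (by simpa using h1) (by simp [hlrlc (by simpa using h2) i₀])
        · rcases Fin.eq_castSucc_or_eq_last i' with ⟨i₀', rfl⟩ | rfl
          · exact absurd (by simpa using h2) (by simp [hlrlc (by simpa using h1) i₀'])
          · rfl

lemma isPP_A (M' : Fin n → Fin n → Bool) :
    isPP (glue M' (fun _ => false) (fun _ => false)) ↔ isPP M' := by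
  rw [isPP_glue_iff]; simp

lemma isPP_B (M' : Fin n → Fin n → Bool) (i : Fin n) :
    isPP (glue M' (fun _ => false) (ind i)) ↔ isPP M' ∧ ∀ j, M' i j = false := by
  rw [isPP_glue_iff]
  simp only [ind, decide_eq_true_eq]
  constructor
  · rintro ⟨h1, _, _, _, h5, _⟩
    exact ⟨h1, h5 i rfl⟩
  · rintro ⟨h1, h2⟩
    refine ⟨h1, by simp, ?_, by simp, ?_, by simp⟩
    · rintro a b rfl rfl; rfl
    · rintro a rfl; exact h2

lemma isPP_C (M' : Fin n → Fin n → Bool) :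
    isPP (glue M' (ind (Fin.last n)) (fun _ => false)) ↔ isPP M' := by
  rw [isPP_glue_iff]
  simp only [ind, decide_eq_true_eq]
  constructor
  · rintro ⟨h1, _⟩; exact h1
  · intro h1
    refine ⟨h1, ?_, by simp, ?_, by simp, by simp⟩
    · rintro a b rfl rfl; rfl
    · rintro j hj
      exact absurd hj (Fin.castSucc_lt_last j).ne

lemma isPP_D (M' : Fin n → Fin n → Bool) (j : Fin n) :
    isPP (glue M' (ind j.castSucc) (fun _ => false)) ↔ isPP M' ∧ ∀ i, M' i j = false := by
  rw [isPP_glue_iff]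
  simp only [ind, decide_eq_true_eq]
  constructor
  · rintro ⟨h1, _, _, h4, _⟩
    exact ⟨h1, h4 j rfl⟩
  · rintro ⟨h1, h2⟩
    refine ⟨h1, ?_, by simp, ?_, by simp, ?_⟩
    · rintro a b rfl rfl; rfl
    · rintro a ha
      rw [Fin.castSucc_inj] at ha
      subst ha; exact h2
    · intro hl
      exact absurd hl (Fin.castSucc_lt_last j).ne'

lemma isPP_E (M' : Fin n → Fin n → Bool) (i : Fin n) :
    ¬ isPP (glue M' (ind (Fin.last n)) (ind i)) := by
  rw [isPP_glue_iff]
  simp only [ind, decide_eq_true_eq]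
  rintro ⟨_, _, _, _, _, h6⟩
  exact absurd (h6 trivial i) (by simp)

lemma isPP_F (M' : Fin n → Fin n → Bool) (j i : Fin n) :
    isPP (glue M' (ind j.castSucc) (ind i)) ↔
      isPP M' ∧ (∀ i', M' i' j = false) ∧ (∀ j', M' i j' = false) := by
  rw [isPP_glue_iff]
  simp only [ind, decide_eq_true_eq]
  constructor
  · rintro ⟨h1, _, _, h4, h5, _⟩
    exact ⟨h1, h4 j rfl, h5 i rfl⟩
  · rintro ⟨h1, h2, h3⟩
    refine ⟨h1, ?_, ?_, ?_, ?_, ?_⟩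
    · rintro a b rfl rfl; rfl
    · rintro a b rfl rfl; rfl
    · rintro a ha
      rw [Fin.castSucc_inj] at ha
      subst ha; exact h2
    · rintro a rfl; exact h3
    · intro hl
      exact absurd hl (Fin.castSucc_lt_last j).ne'

lemma zeroRows_glue (M' : Fin n → Fin n → Bool) (lr : Fin (n+1) → Bool) (lc : Fin n → Bool) :
    zeroRows (glue M' lr lc) =
      (Finset.univ.filter (fun i : Fin n => (∀ j, M' i j = false) ∧ lc i = false)).card
        + (if ∀ j, lr j = false then 1 else 0) := by
  classical
  rw [zeroRows, Finset.card_filter, Finset.card_filter, Fin.sum_univ_castSucc]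
  congr 1
  · apply Finset.sum_congr rfl
    intro i _
    congr 1
    apply propext
    constructor
    · intro h
      refine ⟨fun j => by simpa using h j.castSucc, by simpa using h (Fin.last n)⟩
    · rintro ⟨h1, h2⟩ j
      rcases Fin.eq_castSucc_or_eq_last j with ⟨j₀, rfl⟩ | rfl
      · simpa using h1 j₀
      · simpa using h2
  · congr 1
    apply propext
    constructor
    · intro h j; simpa using h j
    · intro h j; simpa using h j

lemma zr_A (M' : Fin n → Fin n → Bool) :
    zeroRows (glue M' (fun _ => false) (fun _ => false)) = zeroRows M' + 1 := by
  rw [zeroRows_glue]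
  simp [zeroRows]

lemma zr_B (M' : Fin n → Fin n → Bool) (i₀ : Fin n) (h : ∀ j, M' i₀ j = false) :
    zeroRows (glue M' (fun _ => false) (ind i₀)) = zeroRows M' := by
  rw [zeroRows_glue, if_pos (fun _ => rfl)]
  have hfe : (Finset.univ.filter (fun i : Fin n => (∀ j, M' i j = false) ∧ ind i₀ i = false))
      = (Finset.univ.filter (fun i : Fin n => ∀ j, M' i j = false)).erase i₀ := by
    ext x
    rw [Finset.mem_filter, Finset.mem_erase, Finset.mem_filter]
    simp only [Finset.mem_filter, Finset.mem_erase, Finset.mem_univ, true_and, ind]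
    constructor
    · rintro ⟨h1, h2⟩
      simp only [decide_eq_false_iff_not] at h2
      exact ⟨h2, h1⟩
    · rintro ⟨h1, h2⟩
      exact ⟨h2, by simp [h1]⟩
  rw [hfe, Finset.card_erase_of_mem (by simp [h])]
  have : 0 < zeroRows M' := Finset.card_pos.2 ⟨i₀, by simp [h]⟩
  rw [zeroRows] at this ⊢
  omega

lemma zr_lr (M' : Fin n → Fin n → Bool) (jp : Fin (n+1)) :
    zeroRows (glue M' (ind jp) (fun _ => false)) = zeroRows M' := by
  rw [zeroRows_glue, if_neg (fun h => by simpa [ind] using h jp)]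
  simp [zeroRows]

lemma zr_F (M' : Fin n → Fin n → Bool) (jp : Fin (n+1)) (i₀ : Fin n)
    (h : ∀ j, M' i₀ j = false) :
    zeroRows (glue M' (ind jp) (ind i₀)) + 1 = zeroRows M' := by
  rw [zeroRows_glue, if_neg (fun h => by simpa [ind] using h jp)]
  have hfe : (Finset.univ.filter (fun i : Fin n => (∀ j, M' i j = false) ∧ ind i₀ i = false))
      = (Finset.univ.filter (fun i : Fin n => ∀ j, M' i j = false)).erase i₀ := by
    ext x
    rw [Finset.mem_filter, Finset.mem_erase, Finset.mem_filter]
    simp only [Finset.mem_filter, Finset.mem_erase, Finset.mem_univ, true_and, ind]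
    constructor
    · rintro ⟨h1, h2⟩
      simp only [decide_eq_false_iff_not] at h2
      exact ⟨h2, h1⟩
    · rintro ⟨h1, h2⟩
      exact ⟨h2, by simp [h1]⟩
  rw [hfe, Finset.card_erase_of_mem (by simp [h])]
  have : 0 < zeroRows M' := Finset.card_pos.2 ⟨i₀, by simp [h]⟩
  rw [zeroRows] at this ⊢
  omega

def emb : Fin n × Fin n → Fin (n+1) × Fin (n+1) := fun p => (p.1.castSucc, p.2.castSucc)

lemma emb_inj : Function.Injective (emb (n := n)) := by
  rintro ⟨a, b⟩ ⟨c, d⟩ h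
  simp only [emb, Prod.mk.injEq, Fin.castSucc_inj] at h
  simp [Prod.ext_iff, h.1, h.2]

lemma core_cond (M' : Fin n → Fin n → Bool) (lr lc) (i j : Fin n) :
    (glue M' lr lc i.castSucc j.castSucc = true ∧
      ∀ l < j.castSucc, ∃ i' < i.castSucc, glue M' lr lc i' l = true)
    ↔ (M' i j = true ∧ ∀ l < j, ∃ i' < i, M' i' l = true) := by
  rw [glue_cc]
  constructor
  · rintro ⟨h1, h2⟩
    refine ⟨h1, fun l hl => ?_⟩
    obtain ⟨i', hi', hM⟩ := h2 l.castSucc (by rwa [Fin.castSucc_lt_castSucc_iff])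
    obtain ⟨i'', rfl, hi''⟩ := lt_cs_cast hi'
    exact ⟨i'', hi'', by simpa using hM⟩
  · rintro ⟨h1, h2⟩
    refine ⟨h1, fun l hl => ?_⟩
    obtain ⟨l', rfl, hl'⟩ := lt_cs_cast hl
    obtain ⟨i'', hi'', hM⟩ := h2 l' hl'
    exact ⟨i''.castSucc, by rwa [Fin.castSucc_lt_castSucc_iff], by simpa using hM⟩

lemma exists_lt_last_glue (M' : Fin n → Fin n → Bool) (lr lc) (l' : Fin n) :
    (∃ i' < Fin.last n, glue M' lr lc i' l'.castSucc = true) ↔ (∃ i'', M' i'' l' = true) := by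
  constructor
  · rintro ⟨i', hi', hM⟩
    obtain ⟨i'', rfl⟩ := lt_last_cast hi'
    exact ⟨i'', by simpa using hM⟩
  · rintro ⟨i'', hM⟩
    exact ⟨i''.castSucc, Fin.castSucc_lt_last _, by simpa using hM⟩

lemma lastlast_cond (M' : Fin n → Fin n → Bool) (lr lc) :
    (∀ l < Fin.last n, ∃ i' < Fin.last n, glue M' lr lc i' l = true)
      ↔ (∀ l' : Fin n, ∃ i'', M' i'' l' = true) := by
  constructor
  · intro h l'
    exact (exists_lt_last_glue M' lr lc l').1 (h l'.castSucc (Fin.castSucc_lt_last _))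
  · intro h l hl
    obtain ⟨l', rfl⟩ := lt_last_cast hl
    exact (exists_lt_last_glue M' lr lc l').2 (h l')

lemma lastj_cond (M' : Fin n → Fin n → Bool) (lr lc) (j : Fin n) :
    (∀ l < j.castSucc, ∃ i' < Fin.last n, glue M' lr lc i' l = true)
      ↔ (∀ l' < j, ∃ i'', M' i'' l' = true) := by
  constructor
  · intro h l' hl'
    exact (exists_lt_last_glue M' lr lc l').1
      (h l'.castSucc (by rwa [Fin.castSucc_lt_castSucc_iff]))
  · intro h l hl
    obtain ⟨l', rfl, hl'⟩ := lt_cs_cast hl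
    exact (exists_lt_last_glue M' lr lc l').2 (h l' hl')

lemma rlmin_glue (M' : Fin n → Fin n → Bool) (lr : Fin (n+1) → Bool) (lc : Fin n → Bool)
    (hlc : ∀ i : Fin n, lc i = true → ∃ jz : Fin n, ∀ i', M' i' jz = false) :
    rlminStat (glue M' lr lc) = rlminStat M' +
      (Finset.univ.filter (fun j : Fin (n+1) =>
        lr j = true ∧ ∀ l < j, ∃ i' < Fin.last n, glue M' lr lc i' l = true)).card := by
  classical
  set M := glue M' lr lc with hM
  set S : Finset (Fin (n+1) × Fin (n+1)) := Finset.univ.filter (fun p =>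
    M p.1 p.2 = true ∧ ∀ l < p.2, ∃ i' < p.1, M i' l = true) with hS
  have hsplit : (S.filter (fun p => p.1 = Fin.last n)).card
      + (S.filter (fun p => ¬ p.1 = Fin.last n)).card = S.card :=
    Finset.card_filter_add_card_filter_not _
  have h1 : S.filter (fun p => ¬ p.1 = Fin.last n)
      = (Finset.univ.filter (fun p : Fin n × Fin n =>
          M' p.1 p.2 = true ∧ ∀ l < p.2, ∃ i' < p.1, M' i' l = true)).image emb := by
    ext p
    simp only [Finset.mem_filter, Finset.mem_image, Finset.mem_univ, true_and, hS]
    constructor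
    · rintro ⟨⟨hMp, hcond⟩, hne⟩
      rcases Fin.eq_castSucc_or_eq_last p.1 with ⟨i, hi⟩ | hlast
      · rcases Fin.eq_castSucc_or_eq_last p.2 with ⟨j, hj⟩ | hlast2
        · refine ⟨(i, j), ?_, ?_⟩
          · have := (core_cond M' lr lc i j).1 (by rw [← hi, ← hj]; exact ⟨hMp, hcond⟩)
            exact this
          · simp [emb, ← hi, ← hj]
        · exfalso
          have hlci : lc i = true := by
            rw [hi, hlast2] at hMp; simpa [hM] using hMp
          obtain ⟨jz, hjz⟩ := hlc i hlci
          have hzlt : jz.castSucc < p.2 := by rw [hlast2]; exact Fin.castSucc_lt_last _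
          obtain ⟨i', hi', hMi'⟩ := hcond jz.castSucc hzlt
          have : i' < Fin.last n := lt_of_lt_of_le (by rwa [hi] at hi') (Fin.le_last _)
          obtain ⟨i'', rfl⟩ := lt_last_cast this
          have : M' i'' jz = true := by simpa [hM] using hMi'
          simp [hjz i''] at this
      · exact absurd hlast hne
    · rintro ⟨⟨i, j⟩, hmem, rfl⟩
      have := (core_cond M' lr lc i j).2 hmem
      exact ⟨this, (Fin.castSucc_lt_last i).ne⟩
  have h2 : S.filter (fun p => p.1 = Fin.last n)
      = (Finset.univ.filter (fun j : Fin (n+1) =>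
          lr j = true ∧ ∀ l < j, ∃ i' < Fin.last n, glue M' lr lc i' l = true)).image
        (fun j => (Fin.last n, j)) := by
    ext p
    simp only [Finset.mem_filter, Finset.mem_image, Finset.mem_univ, true_and, hS]
    constructor
    · rintro ⟨⟨hMp, hcond⟩, hlast⟩
      refine ⟨p.2, ⟨?_, ?_⟩, ?_⟩
      · rw [hlast] at hMp; simpa [hM] using hMp
      · intro l hl
        obtain ⟨i', hi', h⟩ := hcond l hl
        exact ⟨i', by rwa [hlast] at hi', h⟩
      · rw [Prod.ext_iff]; exact ⟨hlast.symm, rfl⟩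
    · rintro ⟨j, ⟨hj1, hj2⟩, rfl⟩
      exact ⟨⟨by simpa [hM] using hj1, hj2⟩, rfl⟩
  have e1 : (S.filter (fun p => ¬ p.1 = Fin.last n)).card = rlminStat M' := by
    rw [h1, Finset.card_image_of_injective _ emb_inj, rlminStat]
  have e2 : (S.filter (fun p => p.1 = Fin.last n)).card
      = (Finset.univ.filter (fun j : Fin (n+1) =>
          lr j = true ∧ ∀ l < j, ∃ i' < Fin.last n, glue M' lr lc i' l = true)).card := by
    rw [h2, Finset.card_image_of_injective]
    intro a b hab
    simpa using hab
  have : rlminStat (glue M' lr lc) = S.card := rfl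
  rw [← hM] at this e2
  omega

lemma rl_A (M' : Fin n → Fin n → Bool) :
    rlminStat (glue M' (fun _ => false) (fun _ => false)) = rlminStat M' := by
  rw [rlmin_glue M' _ _ (by simp)]
  simp

lemma rl_B (M' : Fin n → Fin n → Bool) (i₀ : Fin n)
    (hz : ∃ jz : Fin n, ∀ i', M' i' jz = false) :
    rlminStat (glue M' (fun _ => false) (ind i₀)) = rlminStat M' := by
  rw [rlmin_glue M' _ _ (fun _ _ => hz)]
  simp

lemma rl_C (M' : Fin n → Fin n → Bool) :
    rlminStat (glue M' (ind (Fin.last n)) (fun _ => false)) = rlminStat M' +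
      (if ∀ l' : Fin n, ∃ i'', M' i'' l' = true then 1 else 0) := by
  rw [rlmin_glue M' _ _ (by simp)]
  congr 1
  by_cases h : ∀ l' : Fin n, ∃ i'', M' i'' l' = true
  · rw [if_pos h, Finset.card_eq_one]
    refine ⟨Fin.last n, ?_⟩
    ext x
    simp only [Finset.mem_filter, Finset.mem_univ, true_and, Finset.mem_singleton,
      ind_eq_true_iff]
    constructor
    · rintro ⟨rfl, _⟩; rfl
    · rintro rfl
      exact ⟨rfl, (lastlast_cond M' _ _).2 h⟩
  · rw [if_neg h, Finset.card_eq_zero, Finset.eq_empty_iff_forall_notMem]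
    intro x hx
    rw [Finset.mem_filter] at hx
    obtain ⟨-, h1, h2⟩ := hx
    rw [ind_eq_true_iff] at h1
    subst h1
    exact h ((lastlast_cond M' _ _).1 h2)

lemma rl_D (M' : Fin n → Fin n → Bool) (j₀ : Fin n) (lc : Fin n → Bool)
    (hlc : ∀ i : Fin n, lc i = true → ∃ jz : Fin n, ∀ i', M' i' jz = false) :
    rlminStat (glue M' (ind j₀.castSucc) lc) = rlminStat M' +
      (if ∀ l' < j₀, ∃ i'', M' i'' l' = true then 1 else 0) := by
  rw [rlmin_glue M' _ _ hlc]
  congr 1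
  by_cases h : ∀ l' < j₀, ∃ i'', M' i'' l' = true
  · rw [if_pos h, Finset.card_eq_one]
    refine ⟨j₀.castSucc, ?_⟩
    ext x
    simp only [Finset.mem_filter, Finset.mem_univ, true_and, Finset.mem_singleton,
      ind_eq_true_iff]
    constructor
    · rintro ⟨rfl, _⟩; rfl
    · rintro rfl
      exact ⟨rfl, (lastj_cond M' _ _ j₀).2 h⟩
  · rw [if_neg h, Finset.card_eq_zero, Finset.eq_empty_iff_forall_notMem]
    intro x hx
    rw [Finset.mem_filter] at hx
    obtain ⟨-, h1, h2⟩ := hx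
    rw [ind_eq_true_iff] at h1
    subst h1
    exact h ((lastj_cond M' _ _ j₀).1 h2)

lemma tcond (M' : Fin n → Fin n → Bool) (j : Fin n) :
    (∀ l' < j, ∃ i'', M' i'' l' = true) ↔ (∀ l < j, l ∉ zeroCols M') := by
  apply forall_congr'
  intro l
  apply imp_congr Iff.rfl
  simp only [zeroCols, Finset.mem_filter, Finset.mem_univ, true_and]
  constructor
  · rintro ⟨i, hi⟩ hall
    simp [hall i] at hi
  · intro h
    by_contra hc
    push_neg at hc
    exact h (fun i => by simpa using hc i)

lemma ZC_empty (M' : Fin n → Fin n → Bool) (hP : isPP M') (h0 : zeroRows M' = 0) :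
    zeroCols M' = ∅ := by
  rw [← Finset.card_eq_zero, card_zeroCols M' hP, h0]

lemma ZC_nonempty (M' : Fin n → Fin n → Bool) (hP : isPP M') (h0 : zeroRows M' ≠ 0) :
    ∃ jz : Fin n, ∀ i', M' i' jz = false := by
  have : 0 < (zeroCols M').card := by rw [card_zeroCols M' hP]; omega
  obtain ⟨jz, hjz⟩ := Finset.card_pos.1 this
  refine ⟨jz, ?_⟩
  simpa [zeroCols] using hjz

lemma sum_ZC (M' : Fin n → Fin n → Bool) (hP : isPP M') (hne : zeroRows M' ≠ 0) :
    (∑ j ∈ zeroCols M', (if (∀ l' < j, ∃ i'', M' i'' l' = true)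
        then (Polynomial.X : Polynomial ℤ) ^ (rlminStat M' + 1) else Polynomial.X ^ (rlminStat M')))
      = (((zeroRows M' - 1 : ℕ) : Polynomial ℤ) + Polynomial.X) * Polynomial.X ^ rlminStat M' := by
  have step : ∀ j ∈ zeroCols M',
      (if (∀ l' < j, ∃ i'', M' i'' l' = true)
        then (Polynomial.X : Polynomial ℤ) ^ (rlminStat M' + 1) else Polynomial.X ^ (rlminStat M'))
      = (if (∀ l < j, l ∉ zeroCols M') then (Polynomial.X : Polynomial ℤ) else 1)
          * Polynomial.X ^ rlminStat M' := by
    intro j _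
    rw [if_congr (tcond M' j) rfl rfl]
    by_cases h : ∀ l < j, l ∉ zeroCols M'
    · rw [if_pos h, if_pos h, pow_succ, mul_comm]
    · rw [if_neg h, if_neg h, one_mul]
  rw [Finset.sum_congr rfl step, ← Finset.sum_mul]
  have hnonempty : (zeroCols M').Nonempty := by
    rw [← Finset.card_pos, card_zeroCols M' hP]; omega
  rw [minsum _ hnonempty, card_zeroCols M' hP]

lemma innerPP (k : ℕ) (M' : Fin n → Fin n → Bool) :
    (∑ lr : Fin (n+1) → Bool, ∑ lc : Fin n → Bool,
      (if isPP (glue M' lr lc) ∧ zeroRows (glue M' lr lc) = k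
        then (Polynomial.X : Polynomial ℤ) ^ rlminStat (glue M' lr lc) else 0))
    = (if isPP M' ∧ zeroRows M' + 1 = k then (Polynomial.X : Polynomial ℤ) ^ rlminStat M' else 0)
      + (if isPP M' ∧ zeroRows M' = k
          then (((2*k : ℕ) : Polynomial ℤ) + Polynomial.X) * Polynomial.X ^ rlminStat M' else 0)
      + (if isPP M' ∧ zeroRows M' = k + 1
          then (((k+1 : ℕ) : Polynomial ℤ) * (((k : ℕ) : Polynomial ℤ) + Polynomial.X))
            * Polynomial.X ^ rlminStat M' else 0) := by
  classical
  set F : (Fin (n+1) → Fin (n+1) → Bool) → Polynomial ℤ :=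
    fun M => if isPP M ∧ zeroRows M = k then (Polynomial.X : Polynomial ℤ) ^ rlminStat M else 0
    with hF
  have hgoal : (∑ lr : Fin (n+1) → Bool, ∑ lc : Fin n → Bool,
      (if isPP (glue M' lr lc) ∧ zeroRows (glue M' lr lc) = k
        then (Polynomial.X : Polynomial ℤ) ^ rlminStat (glue M' lr lc) else 0))
      = ∑ lr : Fin (n+1) → Bool, ∑ lc : Fin n → Bool, F (glue M' lr lc) := rfl
  rw [hgoal]
  by_cases hP : isPP M'
  swap
  · have hz : ∀ lr lc, F (glue M' lr lc) = 0 := by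
      intro lr lc
      rw [hF]
      dsimp only
      rw [if_neg]
      rintro ⟨hpp, -⟩
      exact hP ((isPP_glue_iff _ _ _).1 hpp).1
    rw [Finset.sum_eq_zero (fun lr _ => Finset.sum_eq_zero (fun lc _ => hz lr lc))]
    rw [if_neg (fun hc => hP hc.1), if_neg (fun hc => hP hc.1), if_neg (fun hc => hP hc.1)]
    simp
  · have hFrow : ∀ lr lc, (∃ a a', a ≠ a' ∧ lr a = true ∧ lr a' = true) →
        F (glue M' lr lc) = 0 := by
      rintro lr lc ⟨a, a', hne, ha, ha'⟩
      rw [hF]; dsimp only; rw [if_neg]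
      rintro ⟨hpp, -⟩
      exact hne (((isPP_glue_iff _ _ _).1 hpp).2.1 a a' ha ha')
    have hFcol : ∀ lr lc, (∃ a a', a ≠ a' ∧ lc a = true ∧ lc a' = true) →
        F (glue M' lr lc) = 0 := by
      rintro lr lc ⟨a, a', hne, ha, ha'⟩
      rw [hF]; dsimp only; rw [if_neg]
      rintro ⟨hpp, -⟩
      exact hne (((isPP_glue_iff _ _ _).1 hpp).2.2.1 a a' ha ha')
    rw [sum_boolfun (fun lr => ∑ lc : Fin n → Bool, F (glue M' lr lc))
      (fun lr h => Finset.sum_eq_zero (fun lc _ => hFrow lr lc h))]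
    rw [sum_boolfun (fun lc => F (glue M' (fun _ => false) lc))
      (fun lc h => hFcol _ lc h)]
    rw [Finset.sum_congr rfl (fun jp (_ : jp ∈ Finset.univ) =>
      sum_boolfun (fun lc => F (glue M' (ind jp) lc)) (fun lc h => hFcol _ lc h))]
    rw [Finset.sum_add_distrib]
    rw [Fin.sum_univ_castSucc (f := fun jp => F (glue M' (ind jp) (fun _ => false)))]
    rw [Fin.sum_univ_castSucc (f := fun jp => ∑ i : Fin n, F (glue M' (ind jp) (ind i)))]
    -- abbreviations
    have hzcard : (Finset.univ.filter (fun i : Fin n => ∀ j, M' i j = false)).card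
        = zeroRows M' := rfl
    -- T1
    have eT1 : F (glue M' (fun _ => false) (fun _ => false))
        = (if zeroRows M' + 1 = k then (Polynomial.X : Polynomial ℤ) ^ rlminStat M' else 0) := by
      rw [hF]; dsimp only
      rw [zr_A, rl_A]
      by_cases h : zeroRows M' + 1 = k
      · rw [if_pos ⟨(isPP_A M').2 hP, h⟩, if_pos h]
      · rw [if_neg (fun hc => h hc.2), if_neg h]
    -- T2
    have eT2 : (∑ i : Fin n, F (glue M' (fun _ => false) (ind i)))
        = zeroRows M' • (if zeroRows M' = k then (Polynomial.X : Polynomial ℤ) ^ rlminStat M' else 0) := by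
      have step : ∀ i : Fin n, F (glue M' (fun _ => false) (ind i)) =
          if (∀ j, M' i j = false)
            then (if zeroRows M' = k then (Polynomial.X : Polynomial ℤ) ^ rlminStat M' else 0)
            else 0 := by
        intro i
        by_cases hrow : ∀ j, M' i j = false
        · rw [if_pos hrow, hF]; dsimp only
          have hne : zeroRows M' ≠ 0 := by
            have : 0 < (Finset.univ.filter (fun i : Fin n => ∀ j, M' i j = false)).card :=
              Finset.card_pos.2 ⟨i, by simp [hrow]⟩
            omega
          rw [zr_B M' i hrow, rl_B M' i (ZC_nonempty M' hP hne)]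
          by_cases h : zeroRows M' = k
          · rw [if_pos ⟨(isPP_B M' i).2 ⟨hP, hrow⟩, h⟩, if_pos h]
          · rw [if_neg (fun hc => h hc.2), if_neg h]
        · rw [if_neg hrow, hF]; dsimp only
          rw [if_neg]
          rintro ⟨hpp, -⟩
          exact hrow ((isPP_B M' i).1 hpp).2
      rw [Finset.sum_congr rfl (fun i _ => step i), ← Finset.sum_filter, Finset.sum_const, hzcard]
    -- T3
    have eT3 : F (glue M' (ind (Fin.last n)) (fun _ => false))
        = if zeroRows M' = k
            then (if zeroCols M' = ∅ then (Polynomial.X : Polynomial ℤ) ^ (rlminStat M' + 1)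
              else Polynomial.X ^ rlminStat M')
            else 0 := by
      rw [hF]; dsimp only
      rw [zr_lr, rl_C]
      have hiff : (∀ l' : Fin n, ∃ i'', M' i'' l' = true) ↔ zeroCols M' = ∅ := by
        rw [Finset.eq_empty_iff_forall_notMem]
        apply forall_congr'
        intro l
        simp only [zeroCols, Finset.mem_filter, Finset.mem_univ, true_and]
        constructor
        · rintro ⟨i, hi⟩ hall
          simp [hall i] at hi
        · intro h
          by_contra hc
          push_neg at hc
          exact h (fun i => by simpa using hc i)
      by_cases h : zeroRows M' = k
      · rw [if_pos ⟨(isPP_C M').2 hP, h⟩, if_pos h]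
        by_cases h2 : zeroCols M' = ∅
        · rw [if_pos (hiff.2 h2), if_pos h2]
        · rw [if_neg (fun hc => h2 (hiff.1 hc)), if_neg h2, add_zero]
      · rw [if_neg (fun hc => h hc.2), if_neg h]
    -- T4
    have eT4 : (∑ j : Fin n, F (glue M' (ind j.castSucc) (fun _ => false)))
        = if zeroRows M' = k
            then (∑ j ∈ zeroCols M', (if (∀ l' < j, ∃ i'', M' i'' l' = true)
              then (Polynomial.X : Polynomial ℤ) ^ (rlminStat M' + 1) else Polynomial.X ^ rlminStat M'))
            else 0 := by
      have step : ∀ j : Fin n, F (glue M' (ind j.castSucc) (fun _ => false)) =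
          if (∀ i, M' i j = false)
            then (if zeroRows M' = k
              then (if (∀ l' < j, ∃ i'', M' i'' l' = true)
                then (Polynomial.X : Polynomial ℤ) ^ (rlminStat M' + 1) else Polynomial.X ^ rlminStat M')
              else 0)
            else 0 := by
        intro j
        by_cases hcol : ∀ i, M' i j = false
        · rw [if_pos hcol, hF]; dsimp only
          rw [zr_lr, rl_D M' j _ (by simp)]
          by_cases h : zeroRows M' = k
          · rw [if_pos ⟨(isPP_D M' j).2 ⟨hP, hcol⟩, h⟩, if_pos h]
            by_cases h2 : ∀ l' < j, ∃ i'', M' i'' l' = true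
            · rw [if_pos h2, if_pos h2]
            · rw [if_neg h2, if_neg h2, add_zero]
          · rw [if_neg (fun hc => h hc.2), if_neg h]
        · rw [if_neg hcol, hF]; dsimp only
          rw [if_neg]
          rintro ⟨hpp, -⟩
          exact hcol ((isPP_D M' j).1 hpp).2
      rw [Finset.sum_congr rfl (fun j _ => step j), ← Finset.sum_filter]
      have : (Finset.univ.filter (fun j : Fin n => ∀ i, M' i j = false)) = zeroCols M' := rfl
      rw [this]
      by_cases h : zeroRows M' = k
      · rw [if_pos h]
        apply Finset.sum_congr rfl
        intro j _
        rw [if_pos h]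
      · rw [if_neg h]
        apply Finset.sum_eq_zero
        intro j _
        rw [if_neg h]
    -- T5
    have eT5 : (∑ i : Fin n, F (glue M' (ind (Fin.last n)) (ind i))) = 0 := by
      apply Finset.sum_eq_zero
      intro i _
      rw [hF]; dsimp only
      rw [if_neg]
      rintro ⟨hpp, -⟩
      exact isPP_E M' i hpp
    -- T6
    have eT6 : (∑ j : Fin n, ∑ i : Fin n, F (glue M' (ind j.castSucc) (ind i)))
        = if zeroRows M' = k + 1
            then zeroRows M' • (∑ j ∈ zeroCols M', (if (∀ l' < j, ∃ i'', M' i'' l' = true)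
              then (Polynomial.X : Polynomial ℤ) ^ (rlminStat M' + 1) else Polynomial.X ^ rlminStat M'))
            else 0 := by
      have step : ∀ j : Fin n, (∑ i : Fin n, F (glue M' (ind j.castSucc) (ind i))) =
          if (∀ i, M' i j = false)
            then (zeroRows M' • (if zeroRows M' = k + 1
              then (if (∀ l' < j, ∃ i'', M' i'' l' = true)
                then (Polynomial.X : Polynomial ℤ) ^ (rlminStat M' + 1) else Polynomial.X ^ rlminStat M')
              else 0))
            else 0 := by
        intro j
        by_cases hcol : ∀ i, M' i j = false
        · rw [if_pos hcol]
          have step2 : ∀ i : Fin n, F (glue M' (ind j.castSucc) (ind i)) =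
              if (∀ j', M' i j' = false)
                then (if zeroRows M' = k + 1
                  then (if (∀ l' < j, ∃ i'', M' i'' l' = true)
                    then (Polynomial.X : Polynomial ℤ) ^ (rlminStat M' + 1)
                    else Polynomial.X ^ rlminStat M')
                  else 0)
                else 0 := by
            intro i
            by_cases hrow : ∀ j', M' i j' = false
            · rw [if_pos hrow, hF]; dsimp only
              have hzrF := zr_F M' j.castSucc i hrow
              have hcond : (zeroRows (glue M' (ind j.castSucc) (ind i)) = k)
                  ↔ (zeroRows M' = k + 1) := by omega
              rw [rl_D M' j _ (fun i' hi' => ⟨j, hcol⟩)]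
              by_cases h : zeroRows M' = k + 1
              · rw [if_pos ⟨(isPP_F M' j i).2 ⟨hP, hcol, hrow⟩, hcond.2 h⟩, if_pos h]
                by_cases h2 : ∀ l' < j, ∃ i'', M' i'' l' = true
                · rw [if_pos h2, if_pos h2]
                · rw [if_neg h2, if_neg h2, add_zero]
              · rw [if_neg (fun hc => h (hcond.1 hc.2)), if_neg h]
            · rw [if_neg hrow, hF]; dsimp only
              rw [if_neg]
              rintro ⟨hpp, -⟩
              exact hrow ((isPP_F M' j i).1 hpp).2.2
          rw [Finset.sum_congr rfl (fun i _ => step2 i), ← Finset.sum_filter,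
            Finset.sum_const, hzcard]
        · rw [if_neg hcol]
          apply Finset.sum_eq_zero
          intro i _
          rw [hF]; dsimp only
          rw [if_neg]
          rintro ⟨hpp, -⟩
          exact hcol ((isPP_F M' j i).1 hpp).2.1
      rw [Finset.sum_congr rfl (fun j _ => step j), ← Finset.sum_filter]
      have hzc : (Finset.univ.filter (fun j : Fin n => ∀ i, M' i j = false)) = zeroCols M' := rfl
      rw [hzc]
      by_cases h : zeroRows M' = k + 1
      · rw [if_pos h, Finset.smul_sum]
        apply Finset.sum_congr rfl
        intro j _
        rw [if_pos h]
      · rw [if_neg h]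
        apply Finset.sum_eq_zero
        intro j _
        rw [if_neg h, smul_zero]
    rw [eT1, eT2, eT3, eT4, eT5, eT6]
    simp only [hP, true_and]
    by_cases h1 : zeroRows M' = k
    · rw [if_neg (show ¬(zeroRows M' + 1 = k) by omega),
        if_neg (show ¬(zeroRows M' = k + 1) by omega),
        if_neg (show ¬(zeroRows M' = k + 1) by omega),
        if_pos h1, if_pos h1, if_pos h1, if_pos h1]
      by_cases h0 : zeroRows M' = 0
      · have hk : k = 0 := by omega
        rw [ZC_empty M' hP h0, Finset.sum_empty, if_pos rfl, h0, hk]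
        simp [pow_succ]
        ring
      · have hZne : ¬ (zeroCols M' = ∅) := by
          intro hc
          have hcc := card_zeroCols M' hP
          rw [hc] at hcc
          simp at hcc
          exact h0 hcc.symm
        rw [sum_ZC M' hP h0, if_neg hZne]
        obtain ⟨z', hz'⟩ : ∃ z', zeroRows M' = z' + 1 := ⟨zeroRows M' - 1, by omega⟩
        have hk : k = z' + 1 := by omega
        rw [hz', hk, Nat.add_sub_cancel, nsmul_eq_mul]
        push_cast
        ring
    · by_cases h3 : zeroRows M' = k + 1
      · rw [if_neg (show ¬(zeroRows M' + 1 = k) by omega),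
          if_neg h1, if_neg h1, if_neg h1, if_neg h1, if_pos h3, if_pos h3,
          sum_ZC M' hP (show zeroRows M' ≠ 0 by omega), h3, Nat.add_sub_cancel,
          nsmul_eq_mul]
        push_cast
        ring
      · rw [if_neg h1, if_neg h1, if_neg h1, if_neg h1, if_neg h3, if_neg h3]
        by_cases h2 : zeroRows M' + 1 = k
        · rw [if_pos h2]
          simp
        · rw [if_neg h2]
          simp

open scoped Classical in
noncomputable def bfun (m k : ℕ) : Polynomial ℤ :=
  ∑ M : Fin m → Fin m → Bool,
    if isPP M ∧ zeroRows M = k then (Polynomial.X : Polynomial ℤ) ^ rlminStat M else 0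

lemma bfun_zero (k : ℕ) : bfun 0 k = if k = 0 then 1 else 0 := by
  have hM : ∀ M : Fin 0 → Fin 0 → Bool,
      (if isPP M ∧ zeroRows M = k then (Polynomial.X : Polynomial ℤ) ^ rlminStat M else 0)
        = if k = 0 then 1 else 0 := by
    intro M
    have h1 : isPP M := ⟨fun i => i.elim0, fun i => i.elim0⟩
    have h2 : zeroRows M = 0 := by simp [zeroRows]
    have h3 : rlminStat M = 0 := by
      rw [rlminStat, Finset.card_eq_zero, Finset.eq_empty_iff_forall_notMem]
      intro p _
      exact p.1.elim0
    rw [h2, h3]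
    by_cases hk : k = 0
    · rw [if_pos ⟨h1, hk.symm⟩, if_pos hk, pow_zero]
    · rw [if_neg (fun hc => hk hc.2.symm), if_neg hk]
  rw [bfun, Fintype.sum_unique, hM]

lemma bfun_rec (m k : ℕ) : bfun (m+1) k =
    (if k = 0 then 0 else bfun m (k-1))
    + (((2*k : ℕ) : Polynomial ℤ) + Polynomial.X) * bfun m k
    + (((k+1 : ℕ) : Polynomial ℤ) * (((k : ℕ) : Polynomial ℤ) + Polynomial.X)) * bfun m (k+1) := by
  rw [bfun, sum_glue (F := fun M => if isPP M ∧ zeroRows M = k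
    then (Polynomial.X : Polynomial ℤ) ^ rlminStat M else 0)]
  rw [Finset.sum_congr rfl (fun M' (_ : M' ∈ Finset.univ) => innerPP k M')]
  rw [Finset.sum_add_distrib, Finset.sum_add_distrib]
  congr 1
  · congr 1
    · -- first term
      rcases k with _ | k'
      · rw [if_pos rfl]
        apply Finset.sum_eq_zero
        intro M' _
        rw [if_neg]
        rintro ⟨-, hc⟩
        omega
      · rw [if_neg (Nat.succ_ne_zero _), Nat.succ_sub_one, bfun]
        apply Finset.sum_congr rfl
        intro M' _
        apply if_congr _ rfl rfl
        exact and_congr Iff.rfl (by omega)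
    · rw [bfun, Finset.mul_sum]
      apply Finset.sum_congr rfl
      intro M' _
      rw [mul_ite, mul_zero]
  · rw [bfun, Finset.mul_sum]
    apply Finset.sum_congr rfl
    intro M' _
    rw [mul_ite, mul_zero]

end Aux



open scoped Classical in
theorem stmt10 (a : ℕ → ℕ → Polynomial ℤ)
    (h00 : a 0 0 = 1) (h0k : ∀ k, 0 < k → a 0 k = 0)
    (hrec : ∀ n k, a (n+1) k =
      (if k = 0 then 0 else a n (k-1))
      + (((2*k : ℕ) : Polynomial ℤ) + Polynomial.X) * a n k
      + (((k+1 : ℕ) : Polynomial ℤ) * (((k : ℕ) : Polynomial ℤ) + Polynomial.X)) * a n (k+1)) :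
    ∀ n k, a n k = ∑ M : Fin n → Fin n → Bool,
      if PP.isPP M ∧ PP.zeroRows M = k then (Polynomial.X : Polynomial ℤ) ^ PP.rlminStat M else 0 := by
  have key : ∀ n k, a n k = bfun n k := by
    intro n
    induction n with
    | zero =>
      intro k
      rcases k with _ | k'
      · rw [h00, bfun_zero, if_pos rfl]
      · rw [h0k _ (Nat.succ_pos _), bfun_zero, if_neg (Nat.succ_ne_zero _)]
    | succ n ih =>
      intro k
      rw [hrec n k, bfun_rec n k, ih k, ih (k+1)]
      rcases k with _ | k'
      · rw [if_pos rfl, if_pos rfl]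
      · rw [if_neg (Nat.succ_ne_zero _), if_neg (Nat.succ_ne_zero _), ih]
  intro n k
  rw [key n k, bfun]
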